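/- Let k ≥ 7 and r > k be integers with r − k even. Let G be a finite simple r-regular graph and let G' be the disjoint union of G and the gadget graph gdg_{k,r}. If there exists a set S ⊆ V(G') such that G' ⊕ S is r-regular, then G contains a clique of size k. -/

import Mathlib

/-- The partial complement `G ⊕ S` of a simple graph `G` with respect to a vertex set `S`:
distinct vertices `u, v` are adjacent iff either they are adjacent in `G` and not both
belong to `S`, or they are nonadjacent in `G` and both belong to `S`. -/
def SimpleGraph.partialComplement {V : Type*} (G : SimpleGraph V) (S : Set V) :
    SimpleGraph V where
  Adj u v := u ≠ v ∧ ((G.Adj u v ∧ ¬(u ∈ S ∧ v ∈ S)) ∨ (¬ G.Adj u v ∧ u ∈ S ∧ v ∈ S))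
  symm := by
    refine ⟨?_⟩
    intro u v h
    obtain ⟨hne, h⟩ := h
    refine ⟨hne.symm, ?_⟩
    rcases h with ⟨ha, hs⟩ | ⟨ha, hu, hv⟩
    · exact Or.inl ⟨ha.symm, fun hc => hs ⟨hc.2, hc.1⟩⟩
    · exact Or.inr ⟨fun hvu => ha hvu.symm, hv, hu⟩
  loopless := ⟨fun v h => h.1 rfl⟩

/-- The vertex type of the gadget `gdg_{k,r}`: `Sum.inl i` is the clique vertex
`c_{i+1}`, and `Sum.inr (i, j, false)` / `Sum.inr (i, j, true)` are the vertices
`a^{i+1}_{j+1}` / `b^{i+1}_{j+1}` respectively. -/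
abbrev GadgetVertex (k r : ℕ) := Fin (k - 1) ⊕ (Fin (k - 1) × Fin r × Bool)

/-- The gadget graph `gdg_{k,r}`: the vertices `c_1, …, c_{k-1}` form a clique; for each
`i`, the vertices `a^i_1, …, a^i_r, b^i_1, …, b^i_r` form a complete bipartite graph
`K_{r,r}` minus the matching `{a^i_j b^i_j : j ≤ (r-k)/2}`; and `c_i` is joined to
`a^i_j` and `b^i_j` for all `j ≤ (r-k)/2`. -/
def gadgetGraph (k r : ℕ) : SimpleGraph (GadgetVertex k r) :=
  SimpleGraph.fromRel (fun x y =>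
    match x, y with
    | Sum.inl _, Sum.inl _ => True
    | Sum.inl i, Sum.inr (i', j, _) => i = i' ∧ (j : ℕ) < (r - k) / 2
    | Sum.inr (i', j, _), Sum.inl i => i = i' ∧ (j : ℕ) < (r - k) / 2
    | Sum.inr (i, j, s), Sum.inr (i', l, t) =>
        i = i' ∧ s ≠ t ∧ ¬(j = l ∧ (j : ℕ) < (r - k) / 2))

open Set

lemma pc_adj {V : Type*} (G : SimpleGraph V) (S : Set V) (u v : V) :
    (G.partialComplement S).Adj u v ↔
      u ≠ v ∧ ((G.Adj u v ∧ ¬(u ∈ S ∧ v ∈ S)) ∨ (¬ G.Adj u v ∧ u ∈ S ∧ v ∈ S)) :=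
  Iff.rfl

lemma pc_nbhd_of_not_mem {V : Type*} (G : SimpleGraph V) (S : Set V) {x : V}
    (hx : x ∉ S) : (G.partialComplement S).neighborSet x = G.neighborSet x := by
  ext y
  simp only [SimpleGraph.mem_neighborSet, pc_adj]
  constructor
  · rintro ⟨-, ⟨h, -⟩ | ⟨-, hxS, -⟩⟩
    · exact h
    · exact absurd hxS hx
  · intro h
    exact ⟨G.ne_of_adj h, Or.inl ⟨h, fun hc => hx hc.1⟩⟩

lemma pc_deg_of_mem {V : Type*} [Fintype V] (G : SimpleGraph V) (S : Set V) {x : V}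
    (hx : x ∈ S) :
    ((G.partialComplement S).neighborSet x).ncard
        + 2 * (G.neighborSet x ∩ S).ncard + 1
      = (G.neighborSet x).ncard + S.ncard := by
  have hxN : x ∉ G.neighborSet x := by simp
  have hset : (G.partialComplement S).neighborSet x
      = (G.neighborSet x \ S) ∪ (S \ insert x (G.neighborSet x)) := by
    ext y
    simp only [SimpleGraph.mem_neighborSet, pc_adj, mem_union, mem_diff, mem_insert_iff]
    constructor
    · rintro ⟨hne, ⟨h, hns⟩ | ⟨hna, -, hyS⟩⟩
      · exact Or.inl ⟨h, fun hyS => hns ⟨hx, hyS⟩⟩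
      · exact Or.inr ⟨hyS, by push_neg; exact ⟨fun h => hne h.symm, hna⟩⟩
    · rintro (⟨h, hyS⟩ | ⟨hyS, hy⟩)
      · exact ⟨G.ne_of_adj h, Or.inl ⟨h, fun hc => hyS hc.2⟩⟩
      · push_neg at hy
        exact ⟨fun h => hy.1 h.symm, Or.inr ⟨hy.2, hx, hyS⟩⟩
  have hdisj : Disjoint (G.neighborSet x \ S) (S \ insert x (G.neighborSet x)) := by
    rw [disjoint_left]
    rintro y ⟨-, hyS⟩ ⟨hyS', -⟩
    exact hyS hyS'
  have e0 : ((G.partialComplement S).neighborSet x).ncard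
      = (G.neighborSet x \ S).ncard + (S \ insert x (G.neighborSet x)).ncard := by
    rw [hset, ncard_union_eq hdisj]
  have e1 : (G.neighborSet x \ S).ncard + (G.neighborSet x ∩ S).ncard
      = (G.neighborSet x).ncard := by
    rw [← ncard_union_eq Set.disjoint_sdiff_inter, diff_union_inter]
  have e2 : (S \ insert x (G.neighborSet x)).ncard + (S ∩ insert x (G.neighborSet x)).ncard
      = S.ncard := by
    rw [← ncard_union_eq Set.disjoint_sdiff_inter, diff_union_inter]
  have e3 : S ∩ insert x (G.neighborSet x) = insert x (G.neighborSet x ∩ S) := by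
    ext y
    simp only [mem_inter_iff, mem_insert_iff]
    constructor
    · rintro ⟨hyS, rfl | hyN⟩
      · exact Or.inl rfl
      · exact Or.inr ⟨hyN, hyS⟩
    · rintro (rfl | ⟨hyN, hyS⟩)
      · exact ⟨hx, Or.inl rfl⟩
      · exact ⟨hyS, Or.inr hyN⟩
  have e4 : (insert x (G.neighborSet x ∩ S)).ncard = (G.neighborSet x ∩ S).ncard + 1 := by
    rw [ncard_insert_of_notMem (fun h => hxN h.1)]
  rw [e3, e4] at e2
  omega



lemma gadget_nbhd_c (k r : ℕ) (i : Fin (k-1)) :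
    (gadgetGraph k r).neighborSet (Sum.inl i) =
      (Sum.inl '' {i}ᶜ) ∪
        ((fun p : Fin r × Bool => Sum.inr (i, p.1, p.2)) '' {p | (p.1 : ℕ) < (r-k)/2}) := by
  ext y
  cases y with
  | inl i' =>
    simp only [SimpleGraph.mem_neighborSet, gadgetGraph, SimpleGraph.fromRel_adj,
      mem_union, mem_image, mem_compl_iff, mem_singleton_iff]
    constructor
    · rintro ⟨hne, -⟩
      exact Or.inl ⟨i', fun h => hne (by rw [h]), rfl⟩
    · rintro (⟨i'', hi, h⟩ | ⟨p, -, h⟩)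
      · cases h
        exact ⟨by simpa [eq_comm] using hi, Or.inl trivial⟩
      · exact absurd h (by simp)
  | inr p =>
    obtain ⟨i', j, t⟩ := p
    simp only [SimpleGraph.mem_neighborSet, gadgetGraph, SimpleGraph.fromRel_adj,
      mem_union, mem_image, mem_compl_iff, mem_singleton_iff, mem_setOf_eq]
    constructor
    · rintro ⟨-, (⟨rfl, hj⟩ | ⟨rfl, hj⟩)⟩
      · exact Or.inr ⟨(j, t), hj, rfl⟩
      · exact Or.inr ⟨(j, t), hj, rfl⟩
    · rintro (⟨i'', -, h⟩ | ⟨⟨j', t'⟩, hj, h⟩)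
      · exact absurd h (by simp)
      · simp only [Sum.inr.injEq, Prod.mk.injEq] at h
        obtain ⟨rfl, rfl, rfl⟩ := h
        exact ⟨by simp, Or.inl ⟨rfl, hj⟩⟩


lemma bool_ne_iff' (u t : Bool) : u ≠ t ↔ u = !t := by cases u <;> cases t <;> simp

lemma gadget_nbhd_ab_lt (k r : ℕ) (i : Fin (k-1)) (j : Fin r) (t : Bool)
    (hj : (j : ℕ) < (r-k)/2) :
    (gadgetGraph k r).neighborSet (Sum.inr (i, j, t)) =
      {Sum.inl i} ∪ ((fun l : Fin r => (Sum.inr (i, l, !t) : GadgetVertex k r)) '' {j}ᶜ) := by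
  ext y
  cases y with
  | inl i' =>
    simp only [SimpleGraph.mem_neighborSet, gadgetGraph, SimpleGraph.fromRel_adj,
      mem_union, mem_image, mem_singleton_iff, mem_compl_iff]
    constructor
    · rintro ⟨-, (⟨rfl, -⟩ | ⟨rfl, -⟩)⟩ <;> simp
    · rintro (h | ⟨l, -, h⟩)
      · rw [Sum.inl.injEq] at h
        subst h
        exact ⟨by simp, Or.inl ⟨rfl, hj⟩⟩
      · exact absurd h (by simp)
  | inr p =>
    obtain ⟨i', l, u⟩ := p
    simp only [SimpleGraph.mem_neighborSet, gadgetGraph, SimpleGraph.fromRel_adj,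
      mem_union, mem_image, mem_singleton_iff, mem_compl_iff]
    constructor
    · rintro ⟨hne, (⟨rfl, htu, hc⟩ | ⟨rfl, htu, hc⟩)⟩
      · refine Or.inr ⟨l, fun hlj => hc ⟨(by rw [hlj] : j = l).symm ▸ rfl, hj⟩, ?_⟩
        rw [(bool_ne_iff' u t).mp (by rintro rfl; exact htu rfl)]
      · refine Or.inr ⟨l, ?_, ?_⟩
        · rintro rfl
          exact hc ⟨rfl, hj⟩
        · rw [(bool_ne_iff' u t).mp (by rintro rfl; exact htu rfl)]
    · rintro (h | ⟨l', hl, h⟩)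
      · exact absurd h (by simp)
      · simp only [Sum.inr.injEq, Prod.mk.injEq] at h
        obtain ⟨rfl, rfl, rfl⟩ := h
        refine ⟨?_, Or.inl ⟨rfl, by cases t <;> simp, fun hc => hl hc.1.symm⟩⟩
        simp only [ne_eq, Sum.inr.injEq, Prod.mk.injEq, not_and]
        intro hij hjl
        exact absurd hjl.symm hl

lemma gadget_nbhd_ab_ge (k r : ℕ) (i : Fin (k-1)) (j : Fin r) (t : Bool)
    (hj : ¬ (j : ℕ) < (r-k)/2) :
    (gadgetGraph k r).neighborSet (Sum.inr (i, j, t)) =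
      ((fun l : Fin r => (Sum.inr (i, l, !t) : GadgetVertex k r)) '' univ) := by
  ext y
  cases y with
  | inl i' =>
    simp only [SimpleGraph.mem_neighborSet, gadgetGraph, SimpleGraph.fromRel_adj,
      mem_image, mem_univ]
    constructor
    · rintro ⟨-, (⟨rfl, hc⟩ | ⟨rfl, hc⟩)⟩ <;> exact absurd hc hj
    · rintro ⟨l, -, h⟩
      exact absurd h (by simp)
  | inr p =>
    obtain ⟨i', l, u⟩ := p
    simp only [SimpleGraph.mem_neighborSet, gadgetGraph, SimpleGraph.fromRel_adj,
      mem_image, mem_univ]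
    constructor
    · rintro ⟨hne, (⟨rfl, htu, -⟩ | ⟨rfl, htu, -⟩)⟩ <;>
        exact ⟨l, trivial, by rw [(bool_ne_iff' u t).mp (by rintro rfl; exact htu rfl)]⟩
    · rintro ⟨l', -, h⟩
      simp only [Sum.inr.injEq, Prod.mk.injEq] at h
      obtain ⟨rfl, rfl, rfl⟩ := h
      refine ⟨?_, Or.inl ⟨rfl, by cases t <;> simp, fun hc => hj hc.2⟩⟩
      simp only [ne_eq, Sum.inr.injEq, Prod.mk.injEq, not_and]
      intro _ _
      cases t <;> simp

lemma ncard_compl_singleton' {α : Type*} [Fintype α] (i : α) :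
    ({i}ᶜ : Set α).ncard + 1 = Fintype.card α := by
  have := ncard_add_ncard_compl {i} (toFinite _) (toFinite _)
  rw [ncard_singleton] at this
  rw [Nat.card_eq_fintype_card] at this
  omega

lemma ncard_fin_lt_prod_bool (r m : ℕ) (hmr : m ≤ r) :
    ({p : Fin r × Bool | (p.1 : ℕ) < m}).ncard = m * 2 := by
  have hinj : Function.Injective (fun q : Fin m × Bool => ((Fin.castLE hmr q.1, q.2) : Fin r × Bool)) := by
    rintro ⟨a, b⟩ ⟨c, d⟩ h
    simp only [Prod.mk.injEq] at h
    obtain ⟨h1, h2⟩ := h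
    have : a = c := by
      have := congrArg Fin.val h1
      simp only [Fin.coe_castLE] at this
      exact Fin.ext this
    simp [this, h2]
  have hset : {p : Fin r × Bool | (p.1 : ℕ) < m}
      = (fun q : Fin m × Bool => ((Fin.castLE hmr q.1, q.2) : Fin r × Bool)) '' univ := by
    ext ⟨j, u⟩
    simp only [mem_setOf_eq, image_univ, mem_range]
    constructor
    · intro hj
      exact ⟨(⟨(j : ℕ), hj⟩, u), by simp [Fin.ext_iff]⟩
    · rintro ⟨⟨j', u'⟩, h⟩
      simp only [Prod.mk.injEq] at h
      obtain ⟨h1, -⟩ := h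
      rw [← h1]
      exact j'.2
  rw [hset, ncard_image_of_injective _ hinj, ncard_univ]
  simp [Nat.card_eq_fintype_card, mul_comm]

lemma gadget_deg_c (k r : ℕ) (hk : 7 ≤ k) (hkr : k < r) (heven : Even (r - k))
    (i : Fin (k-1)) :
    ((gadgetGraph k r).neighborSet (Sum.inl i)).ncard + 2 = r := by
  obtain ⟨m, hm⟩ := heven
  have hm2 : (r - k) / 2 = m := by omega
  have hmr : (r - k) / 2 ≤ r := by omega
  rw [gadget_nbhd_c]
  have hdisj : Disjoint ((Sum.inl '' {i}ᶜ) : Set (GadgetVertex k r))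
      ((fun p : Fin r × Bool => (Sum.inr (i, p.1, p.2) : GadgetVertex k r)) '' {p | (p.1 : ℕ) < (r-k)/2}) := by
    rw [disjoint_left]
    rintro x ⟨a, -, rfl⟩ ⟨b, -, hb⟩
    exact absurd hb (by simp)
  rw [ncard_union_eq hdisj]
  have e1 : ((Sum.inl '' {i}ᶜ) : Set (GadgetVertex k r)).ncard = ({i}ᶜ : Set (Fin (k-1))).ncard :=
    ncard_image_of_injective _ Sum.inl_injective
  have e2 : ((fun p : Fin r × Bool => (Sum.inr (i, p.1, p.2) : GadgetVertex k r)) ''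
      {p | (p.1 : ℕ) < (r-k)/2}).ncard = ((r-k)/2) * 2 := by
    rw [ncard_image_of_injective, hm2, ← hm2, ncard_fin_lt_prod_bool r _ hmr]
    rintro ⟨a, b⟩ ⟨c, d⟩ h
    simp only [Sum.inr.injEq, Prod.mk.injEq] at h
    simp [Prod.ext_iff, h.2.1, h.2.2]
  have e3 := ncard_compl_singleton' i
  rw [Fintype.card_fin] at e3
  omega

lemma gadget_deg_ab (k r : ℕ) (hk : 7 ≤ k) (hkr : k < r)
    (i : Fin (k-1)) (j : Fin r) (t : Bool) :
    ((gadgetGraph k r).neighborSet (Sum.inr (i, j, t))).ncard = r := by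
  have hinj : Function.Injective (fun l : Fin r => (Sum.inr (i, l, !t) : GadgetVertex k r)) := by
    intro a b h
    simpa using h
  by_cases hj : (j : ℕ) < (r-k)/2
  · rw [gadget_nbhd_ab_lt k r i j t hj]
    have hdisj : Disjoint ({Sum.inl i} : Set (GadgetVertex k r))
        ((fun l : Fin r => (Sum.inr (i, l, !t) : GadgetVertex k r)) '' {j}ᶜ) := by
      rw [disjoint_left]
      rintro x rfl ⟨b, -, hb⟩
      exact absurd hb (by simp)
    rw [ncard_union_eq hdisj, ncard_singleton, ncard_image_of_injective _ hinj]
    have := ncard_compl_singleton' j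
    rw [Fintype.card_fin] at this
    omega
  · rw [gadget_nbhd_ab_ge k r i j t hj, ncard_image_of_injective _ hinj, ncard_univ]
    simp

lemma sum_nbhd_inl {α β : Type*} (G : SimpleGraph α) (H : SimpleGraph β) (v : α) :
    (G ⊕g H).neighborSet (Sum.inl v) = Sum.inl '' G.neighborSet v := by
  ext y
  cases y with
  | inl u => simp [SimpleGraph.sum_adj]
  | inr u => simp [SimpleGraph.sum_adj]

lemma sum_nbhd_inr {α β : Type*} (G : SimpleGraph α) (H : SimpleGraph β) (v : β) :
    (G ⊕g H).neighborSet (Sum.inr v) = Sum.inr '' H.neighborSet v := by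
  ext y
  cases y with
  | inl u => simp [SimpleGraph.sum_adj]
  | inr u => simp [SimpleGraph.sum_adj]


/-- If `G` is `r`-regular (with `7 ≤ k < r`, `r - k` even) and some partial complement
of the disjoint union `G' = G ⊔ gdg_{k,r}` is `r`-regular, then `G` contains a clique
of size `k` (degrees are measured as the cardinalities of neighbor sets). -/
theorem clique_of_partialComplement_disjUnion_gadget_regular {V : Type*} [Fintype V]
    (G : SimpleGraph V) (k r : ℕ) (hk : 7 ≤ k) (hkr : k < r)
    (heven : Even (r - k))
    (hreg : ∀ v : V, (G.neighborSet v).ncard = r)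
    (hsol : ∃ S : Set (V ⊕ GadgetVertex k r),
      ∀ x : V ⊕ GadgetVertex k r,
        (((G ⊕g gadgetGraph k r).partialComplement S).neighborSet x).ncard = r) :
    ∃ C : Set V, G.IsClique C ∧ C.ncard = k := by
  classical
  obtain ⟨S, hS⟩ := hsol
  set H : SimpleGraph (V ⊕ GadgetVertex k r) := G ⊕g gadgetGraph k r with hHdef
  have degv : ∀ v : V, (H.neighborSet (Sum.inl v)).ncard = r := by
    intro v
    rw [hHdef, sum_nbhd_inl, ncard_image_of_injective _ Sum.inl_injective]
    exact hreg v
  have degc : ∀ i, (H.neighborSet (Sum.inr (Sum.inl i))).ncard + 2 = r := by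
    intro i
    rw [hHdef, sum_nbhd_inr, ncard_image_of_injective _ Sum.inr_injective]
    exact gadget_deg_c k r hk hkr heven i
  have degab : ∀ i j t, (H.neighborSet (Sum.inr (Sum.inr (i, j, t)))).ncard = r := by
    intro i j t
    rw [hHdef, sum_nbhd_inr, ncard_image_of_injective _ Sum.inr_injective]
    exact gadget_deg_ab k r hk hkr i j t
  have hcS : ∀ i, Sum.inr (Sum.inl i) ∈ S := by
    intro i
    by_contra h
    have h1 := hS (Sum.inr (Sum.inl i))
    rw [pc_nbhd_of_not_mem _ _ h] at h1
    have h2 := degc i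
    omega
  have hkr1 : Fintype.card (Fin (k-1)) = k - 1 := Fintype.card_fin _
  set Cset : Set (V ⊕ GadgetVertex k r) :=
    Set.range (fun i : Fin (k-1) => Sum.inr (Sum.inl i)) with hCdef
  have hCcard : Cset.ncard = k - 1 := by
    rw [hCdef, ← image_univ, ncard_image_of_injective, ncard_univ,
      Nat.card_eq_fintype_card, hkr1]
    intro a b h
    simpa using h
  have hCsub : Cset ⊆ S := by rintro x ⟨i, rfl⟩; exact hcS i
  obtain ⟨i0, -⟩ : ∃ _ : Fin (k-1), True := ⟨⟨0, by omega⟩, trivial⟩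
  set d := (H.neighborSet (Sum.inr (Sum.inl i0)) ∩ S).ncard with hddef
  have hseq : S.ncard = 2 * d + 3 := by
    have h1 := pc_deg_of_mem H S (hcS i0)
    rw [hS] at h1
    have h2 := degc i0
    omega
  have hdge : k - 2 ≤ d := by
    have hsub : (fun i' : Fin (k-1) => (Sum.inr (Sum.inl i') : V ⊕ GadgetVertex k r)) '' {i0}ᶜ
        ⊆ H.neighborSet (Sum.inr (Sum.inl i0)) ∩ S := by
      rintro x ⟨i', hi', rfl⟩
      refine ⟨?_, hcS i'⟩
      show H.Adj (Sum.inr (Sum.inl i0)) (Sum.inr (Sum.inl i'))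
      rw [hHdef]
      simp only [SimpleGraph.sum_adj, gadgetGraph, SimpleGraph.fromRel_adj]
      refine ⟨?_, Or.inl trivial⟩
      simp only [ne_eq, Sum.inl.injEq]
      intro h
      exact hi' h.symm
    have h1 := ncard_le_ncard hsub (toFinite _)
    rw [ncard_image_of_injective] at h1
    · have h2 := ncard_compl_singleton' i0
      rw [hkr1] at h2
      omega
    · intro a b h
      simpa using h
  set Op : Fin (k-1) → Bool → Set (V ⊕ GadgetVertex k r) :=
    fun i t => Set.range (fun l : Fin r => Sum.inr (Sum.inr (i, l, t))) with hOpdef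
  have key : ∀ (i : Fin (k-1)) (j : Fin r) (t : Bool), Sum.inr (Sum.inr (i, j, t)) ∈ S →
      d ≤ (S ∩ Op i (!t)).ncard := by
    intro i j t hx
    have h1 := pc_deg_of_mem H S hx
    rw [hS, degab i j t] at h1
    have hsub : H.neighborSet (Sum.inr (Sum.inr (i, j, t))) ∩ S ⊆
        insert (Sum.inr (Sum.inl i)) (S ∩ Op i (!t)) := by
      rintro y ⟨hyN, hyS⟩
      rw [hHdef, sum_nbhd_inr] at hyN
      obtain ⟨z, hz, rfl⟩ := hyN
      by_cases hj : (j : ℕ) < (r - k) / 2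
      · rw [gadget_nbhd_ab_lt k r i j t hj] at hz
        rcases hz with hz | ⟨l, -, rfl⟩
        · rw [hz]
          exact mem_insert _ _
        · exact mem_insert_of_mem _ ⟨hyS, ⟨l, rfl⟩⟩
      · rw [gadget_nbhd_ab_ge k r i j t hj] at hz
        obtain ⟨l, -, rfl⟩ := hz
        exact mem_insert_of_mem _ ⟨hyS, ⟨l, rfl⟩⟩
    have h2 := ncard_le_ncard hsub (toFinite _)
    have h3 := ncard_insert_le (Sum.inr (Sum.inl i)) (S ∩ Op i (!t))
    omega
  have hab : ∀ (i : Fin (k-1)) (j : Fin r) (t : Bool), Sum.inr (Sum.inr (i, j, t)) ∉ S := by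
    intro i j t hx
    have h1 := key i j t hx
    have hne : (S ∩ Op i (!t)).Nonempty := nonempty_of_ncard_ne_zero (by omega)
    obtain ⟨y, hyS, l, rfl⟩ := hne
    have h2 := key i l (!t) hyS
    rw [Bool.not_not] at h2
    have hd1 : Disjoint Cset (S ∩ Op i t ∪ S ∩ Op i (!t)) := by
      rw [disjoint_left]
      rintro x ⟨i', rfl⟩ hx2
      rcases hx2 with ⟨-, l', h⟩ | ⟨-, l', h⟩ <;> simp at h
    have hd2 : Disjoint (S ∩ Op i t) (S ∩ Op i (!t)) := by
      rw [disjoint_left]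
      rintro x ⟨-, l1, rfl⟩ ⟨-, l2, h⟩
      simp at h
    have hsubS : Cset ∪ (S ∩ Op i t ∪ S ∩ Op i (!t)) ⊆ S := by
      rintro x (hx2 | hx2 | hx2)
      · exact hCsub hx2
      · exact hx2.1
      · exact hx2.1
    have h3 := ncard_le_ncard hsubS (toFinite _)
    rw [ncard_union_eq hd1, ncard_union_eq hd2, hCcard] at h3
    omega
  have hdeq : d = k - 2 := by
    have heq2 : H.neighborSet (Sum.inr (Sum.inl i0)) ∩ S
        = (fun i' : Fin (k-1) => (Sum.inr (Sum.inl i') : V ⊕ GadgetVertex k r)) '' {i0}ᶜ := by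
      apply Subset.antisymm
      · rintro y ⟨hyN, hyS⟩
        rw [hHdef, sum_nbhd_inr, gadget_nbhd_c] at hyN
        obtain ⟨z, hz, rfl⟩ := hyN
        rcases hz with ⟨i', hi', rfl⟩ | ⟨⟨j, t⟩, -, rfl⟩
        · exact ⟨i', hi', rfl⟩
        · exact absurd hyS (hab i0 j t)
      · rintro x ⟨i', hi', rfl⟩
        refine ⟨?_, hcS i'⟩
        show H.Adj (Sum.inr (Sum.inl i0)) (Sum.inr (Sum.inl i'))
        rw [hHdef]
        simp only [SimpleGraph.sum_adj, gadgetGraph, SimpleGraph.fromRel_adj]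
        refine ⟨?_, Or.inl trivial⟩
        simp only [ne_eq, Sum.inl.injEq]
        intro h
        exact hi' h.symm
    have h2 := ncard_compl_singleton' i0
    rw [hkr1] at h2
    rw [hddef, heq2, ncard_image_of_injective]
    · omega
    · intro a b h
      simpa using h
  have hs2 : S.ncard = 2 * k - 1 := by omega
  set SV : Set V := {v | Sum.inl v ∈ S} with hSVdef
  have hSsplit : S = Sum.inl '' SV ∪ Cset := by
    ext x
    cases x with
    | inl v =>
      simp only [mem_union, mem_image, hSVdef, mem_setOf_eq, hCdef, mem_range]
      constructor
      · intro h
        exact Or.inl ⟨v, h, rfl⟩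
      · rintro (⟨u, hu, h⟩ | ⟨i, h⟩)
        · rw [Sum.inl.injEq] at h
          subst h
          exact hu
        · exact absurd h (by simp)
    | inr z =>
      cases z with
      | inl i =>
        simp only [mem_union, mem_image, hCdef, mem_range]
        exact ⟨fun _ => Or.inr ⟨i, rfl⟩, fun _ => hcS i⟩
      | inr p =>
        obtain ⟨i, j, t⟩ := p
        simp only [mem_union, mem_image, hCdef, mem_range]
        constructor
        · intro h
          exact absurd h (hab i j t)
        · rintro (⟨u, -, h⟩ | ⟨i', h⟩) <;> exact absurd h (by simp)
  have hSVcard : SV.ncard = k := by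
    have hd3 : Disjoint (Sum.inl '' SV : Set (V ⊕ GadgetVertex k r)) Cset := by
      rw [disjoint_left]
      rintro x ⟨v, -, rfl⟩ ⟨i, h⟩
      simp at h
    have h4 := congrArg Set.ncard hSsplit
    rw [ncard_union_eq hd3, ncard_image_of_injective _ Sum.inl_injective, hCcard] at h4
    omega
  have hnb : ∀ v ∈ SV, G.neighborSet v ∩ SV = SV \ {v} := by
    intro v hv
    have h1 := pc_deg_of_mem H S (show Sum.inl v ∈ S from hv)
    rw [hS, degv v] at h1
    have heqN : H.neighborSet (Sum.inl v) ∩ S = Sum.inl '' (G.neighborSet v ∩ SV) := by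
      rw [hHdef, sum_nbhd_inl]
      ext y
      constructor
      · rintro ⟨⟨u, hu, rfl⟩, hyS⟩
        exact ⟨u, ⟨hu, hyS⟩, rfl⟩
      · rintro ⟨u, ⟨hu, huS⟩, rfl⟩
        exact ⟨⟨u, hu, rfl⟩, huS⟩
    rw [heqN, ncard_image_of_injective _ Sum.inl_injective] at h1
    have hsub : G.neighborSet v ∩ SV ⊆ SV \ {v} := by
      rintro u ⟨hu, huSV⟩
      refine ⟨huSV, fun h => ?_⟩
      rw [mem_singleton_iff] at h
      subst h
      exact G.irrefl hu
    have hcd : (SV \ {v}).ncard = k - 1 := by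
      rw [ncard_diff_singleton_of_mem hv]
      omega
    exact eq_of_subset_of_ncard_le hsub (by omega) (toFinite _)
  refine ⟨SV, ?_, hSVcard⟩
  intro u hu w hw huw
  have h5 := hnb u hu
  have hw' : w ∈ SV \ {u} := ⟨hw, by simpa using Ne.symm huw⟩
  rw [← h5] at hw'
  exact hw'.1
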